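/- The effective resistance R(p,q) defined from a resistance form (E, Dom E) on a countable set V_* is a metric on V_*. -/

import Mathlib

open Filter Topology

/-- A finitely ramified cell structure on a compact metric space `F`
(Teplyaev, "Harmonic coordinates on fractals with finitely ramified cell structure",
Definition of a finitely ramified fractal). -/
structure FRCS (F : Type) [MetricSpace F] [CompactSpace F] : Type 1 where
  /-- the countable index set -/
  A : Type
  countable_A : Countable A
  /-- the cells -/
  cell : A → Set F
  /-- the vertex (boundary) sets of the cells -/
  V : A → Finset F
  cell_injective : Function.Injective cell
  cell_compact : ∀ α, IsCompact (cell α)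
  cell_connected : ∀ α, IsConnected (cell α)
  V_subset_cell : ∀ α, (V α : Set F) ⊆ cell α
  two_le_card_V : ∀ α, 2 ≤ (V α).card
  /-- the filtration `𝒜_n` -/
  level : ℕ → Finset A
  /-- the index of the whole space `F₀ = F` -/
  top : A
  level_zero : level 0 = {top}
  cell_top : cell top = Set.univ
  level_disjoint : ∀ m n, m ≠ n → Disjoint (level m) (level n)
  subdiv : ∀ n, ∀ α ∈ level n, ∃ s : Finset A, s.Nonempty ∧ s ⊆ level (n + 1) ∧
    cell α = (⋃ β ∈ s, cell β) ∧ (V α : Set F) ⊆ (⋃ β ∈ s, (V β : Set F))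
  inter_cells : ∀ n, ∀ α ∈ level n, ∀ α' ∈ level n, α ≠ α' →
    cell α ∩ cell α' = (V α : Set F) ∩ (V α' : Set F)
  nested_singleton : ∀ c : ℕ → A, (∀ n, cell (c (n + 1)) ⊂ cell (c n)) →
    ∃ x : F, (⋂ n, cell (c n)) = {x}

namespace FRCS

variable {F : Type} [MetricSpace F] [CompactSpace F]

/-- The set `V_* = ⋃_α V_α` of all vertex points. -/
def Vstar (S : FRCS F) : Set F := ⋃ α, (S.V α : Set F)

/-- `U_n(x)`: the union of all `n`-cells containing `x`. -/
def U (S : FRCS F) (n : ℕ) (x : F) : Set F :=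
  ⋃ α ∈ {α ∈ (S.level n : Set S.A) | x ∈ S.cell α}, S.cell α

end FRCS
/-- A resistance form `(𝓔, Dom 𝓔)` on a set `V` in the sense of Kigami:
(RF1) `dom` is a linear subspace of `ℓ(V)` containing constants, `Energy` is a nonnegative
symmetric quadratic form vanishing exactly on constants; (RF2) the quotient modulo constants
is a Hilbert space (completeness); (RF3) finite extension property; (RF4) the effective
resistance suprema are finite; (RF5) the Markov property. -/
structure ResistanceForm (V : Type) : Type where
  dom : Set (V → ℝ)
  Energy : (V → ℝ) → (V → ℝ) → ℝ
  dom_add_smul : ∀ u ∈ dom, ∀ v ∈ dom, ∀ a b : ℝ, (a • u + b • v) ∈ dom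
  const_mem : ∀ c : ℝ, (fun _ => c) ∈ dom
  symm : ∀ u v, Energy u v = Energy v u
  add_smul_left : ∀ u v w : V → ℝ, ∀ a b : ℝ,
    Energy (a • u + b • v) w = a * Energy u w + b * Energy v w
  nonneg : ∀ u ∈ dom, 0 ≤ Energy u u
  energy_zero_iff : ∀ u ∈ dom, (Energy u u = 0 ↔ ∃ c : ℝ, u = fun _ => c)
  complete : ∀ u : ℕ → (V → ℝ), (∀ n, u n ∈ dom) →
    (∀ ε : ℝ, 0 < ε → ∃ N, ∀ m ≥ N, ∀ n ≥ N, Energy (u m - u n) (u m - u n) < ε) →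
    ∃ v ∈ dom, Filter.Tendsto (fun n => Energy (u n - v) (u n - v)) Filter.atTop (nhds 0)
  exists_extension : ∀ (s : Finset V) (g : V → ℝ), ∃ u ∈ dom, ∀ p ∈ s, u p = g p
  bddAbove : ∀ p q : V,
    BddAbove {r : ℝ | ∃ u ∈ dom, 0 < Energy u u ∧ r = (u p - u q) ^ 2 / Energy u u}
  markov : ∀ u ∈ dom, (fun p => min 1 (max 0 (u p))) ∈ dom ∧
    Energy (fun p => min 1 (max 0 (u p))) (fun p => min 1 (max 0 (u p))) ≤ Energy u u

namespace ResistanceForm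

variable {V : Type}

/-- The effective resistance
`R(p,q) = sup { (u(p) - u(q))² / 𝓔(u,u) : u ∈ Dom 𝓔, 𝓔(u,u) > 0 }`. -/
noncomputable def R (rf : ResistanceForm V) (p q : V) : ℝ :=
  sSup {r : ℝ | ∃ u ∈ rf.dom, 0 < rf.Energy u u ∧ r = (u p - u q) ^ 2 / rf.Energy u u}

end ResistanceForm
namespace ResistanceForm

variable {V : Type} (rf : ResistanceForm V)

lemma R_eq (p q : V) : rf.R p q =
    sSup {r : ℝ | ∃ u ∈ rf.dom, 0 < rf.Energy u u ∧
      r = (u p - u q) ^ 2 / rf.Energy u u} := rfl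

lemma E_add_left (u v w : V → ℝ) :
    rf.Energy (u + v) w = rf.Energy u w + rf.Energy v w := by
  have h := rf.add_smul_left u v w 1 1
  simpa using h

lemma E_smul_left (a : ℝ) (u w : V → ℝ) :
    rf.Energy (a • u) w = a * rf.Energy u w := by
  have h := rf.add_smul_left u u w a 0
  simpa using h

lemma E_add_right (u v w : V → ℝ) :
    rf.Energy w (u + v) = rf.Energy w u + rf.Energy w v := by
  rw [rf.symm w (u + v), rf.E_add_left, rf.symm u w, rf.symm v w]

lemma E_smul_right (a : ℝ) (u w : V → ℝ) :
    rf.Energy w (a • u) = a * rf.Energy w u := by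
  rw [rf.symm w (a • u), rf.E_smul_left, rf.symm u w]

lemma E_expand (u v : V → ℝ) :
    rf.Energy (u + v) (u + v) =
      rf.Energy u u + 2 * rf.Energy u v + rf.Energy v v := by
  rw [rf.E_add_left, rf.E_add_right, rf.E_add_right, rf.symm v u]; ring

lemma E_sub_expand (u v : V → ℝ) :
    rf.Energy (u - v) (u - v) =
      rf.Energy u u - 2 * rf.Energy u v + rf.Energy v v := by
  have h : u - v = u + (-1 : ℝ) • v := by rw [neg_one_smul, ← sub_eq_add_neg]
  rw [h, rf.E_expand, rf.E_smul_right, rf.E_smul_left, rf.E_smul_right]; ring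

lemma dom_add {u v : V → ℝ} (hu : u ∈ rf.dom) (hv : v ∈ rf.dom) :
    u + v ∈ rf.dom := by
  have h := rf.dom_add_smul u hu v hv 1 1
  simpa using h

lemma dom_sub {u v : V → ℝ} (hu : u ∈ rf.dom) (hv : v ∈ rf.dom) :
    u - v ∈ rf.dom := by
  have h := rf.dom_add_smul u hu v hv 1 (-1)
  simpa [sub_eq_add_neg] using h

lemma cs {u v : V → ℝ} (hu : u ∈ rf.dom) (hv : v ∈ rf.dom) :
    rf.Energy u v ^ 2 ≤ rf.Energy u u * rf.Energy v v := by
  have key : ∀ t : ℝ,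
      0 ≤ rf.Energy v v * (t * t) + (2 * rf.Energy u v) * t + rf.Energy u u := by
    intro t
    have hm : u + t • v ∈ rf.dom := by
      have h := rf.dom_add_smul u hu v hv 1 t; simpa using h
    have h0 := rf.nonneg _ hm
    rw [rf.E_expand, rf.E_smul_right, rf.E_smul_left, rf.E_smul_right] at h0
    nlinarith [h0]
  have hd := discrim_le_zero key
  rw [discrim] at hd
  nlinarith [hd]

lemma E_const_right {u : V → ℝ} (hu : u ∈ rf.dom) (c : ℝ) :
    rf.Energy u (fun _ => c) = 0 := by
  have hc := rf.const_mem c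
  have h0 : rf.Energy (fun _ : V => c) (fun _ => c) = 0 :=
    (rf.energy_zero_iff _ hc).mpr ⟨c, rfl⟩
  have h1 := rf.cs hu hc
  rw [h0, mul_zero] at h1
  have h2 : rf.Energy u (fun _ => c) ^ 2 = 0 := le_antisymm h1 (sq_nonneg _)
  exact pow_eq_zero_iff two_ne_zero |>.mp h2

lemma sq_le_R_mul {u : V → ℝ} (hu : u ∈ rf.dom) (p q : V) :
    (u p - u q) ^ 2 ≤ rf.R p q * rf.Energy u u := by
  rcases eq_or_lt_of_le (rf.nonneg u hu) with h | h
  · obtain ⟨c, hc⟩ := (rf.energy_zero_iff u hu).mp h.symm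
    have h1 : u p - u q = 0 := by rw [hc]; simp
    rw [h1, ← h, mul_zero]
    norm_num
  · have hmem : (u p - u q) ^ 2 / rf.Energy u u ∈
        {r : ℝ | ∃ u' ∈ rf.dom, 0 < rf.Energy u' u' ∧
          r = (u' p - u' q) ^ 2 / rf.Energy u' u'} := ⟨u, hu, h, rfl⟩
    have h1 : (u p - u q) ^ 2 / rf.Energy u u ≤ rf.R p q := by
      rw [rf.R_eq]; exact le_csSup (rf.bddAbove p q) hmem
    rw [div_le_iff₀ h] at h1
    linarith

lemma R_nonneg (p q : V) : 0 ≤ rf.R p q := by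
  rw [rf.R_eq]
  apply Real.sSup_nonneg
  rintro x ⟨u, hu, hE, rfl⟩
  exact div_nonneg (sq_nonneg _) hE.le

lemma R_symm (p q : V) : rf.R p q = rf.R q p := by
  rw [rf.R_eq, rf.R_eq]
  congr 1
  ext x
  constructor <;> rintro ⟨u, hu, hE, rfl⟩ <;> exact ⟨u, hu, hE, by ring⟩

lemma R_self (p : V) : rf.R p p = 0 := by
  refine le_antisymm ?_ (rf.R_nonneg p p)
  rw [rf.R_eq]
  refine Real.sSup_le ?_ le_rfl
  rintro x ⟨u, hu, hE, rfl⟩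
  simp

lemma exists_sep {p q : V} (hpq : p ≠ q) :
    ∃ u ∈ rf.dom, u p = 1 ∧ u q = 0 := by
  classical
  obtain ⟨u, hu, hval⟩ := rf.exists_extension {p, q}
    (fun x => if x = p then 1 else 0)
  refine ⟨u, hu, ?_, ?_⟩
  · have h := hval p (by simp); simpa using h
  · have h := hval q (by simp); simpa [Ne.symm hpq] using h

lemma energy_pos_of_sep {u : V → ℝ} {p q : V} (hu : u ∈ rf.dom)
    (hp : u p = 1) (hq : u q = 0) : 0 < rf.Energy u u := by
  rcases eq_or_lt_of_le (rf.nonneg u hu) with h | h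
  · exfalso
    obtain ⟨c, hc⟩ := (rf.energy_zero_iff u hu).mp h.symm
    have h1 : c = 1 := by rw [hc] at hp; simpa using hp
    have h0 : c = 0 := by rw [hc] at hq; simpa using hq
    rw [h1] at h0; exact one_ne_zero h0
  · exact h

lemma exists_min {p q : V} (hpq : p ≠ q) :
    ∃ h ∈ rf.dom, h p = 1 ∧ h q = 0 ∧
      (∀ f ∈ rf.dom, f p = 1 → f q = 0 → rf.Energy h h ≤ rf.Energy f f) := by
  classical
  set T : Set ℝ :=
    {e | ∃ u ∈ rf.dom, u p = 1 ∧ u q = 0 ∧ e = rf.Energy u u} with hT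
  obtain ⟨u₀, hu₀, hp₀, hq₀⟩ := rf.exists_sep hpq
  have hTne : T.Nonempty := ⟨_, u₀, hu₀, hp₀, hq₀, rfl⟩
  have hTbdd : BddBelow T := by
    refine ⟨0, ?_⟩
    rintro e ⟨u, hu, -, -, rfl⟩
    exact rf.nonneg u hu
  set m := sInf T with hm
  have hmle : ∀ f ∈ rf.dom, f p = 1 → f q = 0 → m ≤ rf.Energy f f := by
    intro f hf h1 h0
    exact csInf_le hTbdd ⟨f, hf, h1, h0, rfl⟩
  have hmnn : 0 ≤ m := by
    apply le_csInf hTne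
    rintro e ⟨u, hu, -, -, rfl⟩
    exact rf.nonneg u hu
  -- minimizing sequence
  have hseq : ∀ n : ℕ, ∃ u, u ∈ rf.dom ∧ u p = 1 ∧ u q = 0 ∧
      rf.Energy u u < m + 1 / ((n : ℝ) + 1) := by
    intro n
    by_contra hcon
    push_neg at hcon
    have hle : m + 1 / ((n : ℝ) + 1) ≤ m := by
      rw [hm]
      apply le_csInf hTne
      rintro e ⟨u, hu, h1, h0, rfl⟩
      exact hcon u hu h1 h0
    have hpos : (0 : ℝ) < 1 / ((n : ℝ) + 1) := by positivity
    linarith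
  choose u hudom hup huq huE using hseq
  have huEm : ∀ n, m ≤ rf.Energy (u n) (u n) :=
    fun n => hmle _ (hudom n) (hup n) (huq n)
  -- Cauchy in energy (parallelogram law)
  have key : ∀ j k : ℕ, rf.Energy (u j - u k) (u j - u k) ≤
      2 * (1 / ((j : ℝ) + 1)) + 2 * (1 / ((k : ℝ) + 1)) := by
    intro j k
    have hmid : ((1 : ℝ) / 2) • (u j + u k) ∈ rf.dom := by
      rw [smul_add]
      exact rf.dom_add_smul _ (hudom j) _ (hudom k) _ _
    have hmidp : (((1 : ℝ) / 2) • (u j + u k)) p = 1 := by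
      simp [hup j, hup k]; norm_num
    have hmidq : (((1 : ℝ) / 2) • (u j + u k)) q = 0 := by
      simp [huq j, huq k]
    have hmge := hmle _ hmid hmidp hmidq
    have e1 : rf.Energy (((1 : ℝ) / 2) • (u j + u k)) (((1 : ℝ) / 2) • (u j + u k))
        = (1 / 2) * ((1 / 2) * rf.Energy (u j + u k) (u j + u k)) := by
      rw [rf.E_smul_left, rf.E_smul_right]
    have e2 := rf.E_expand (u j) (u k)
    have e3 := rf.E_sub_expand (u j) (u k)
    have hj := huE j
    have hk := huE k
    rw [e1, e2] at hmge
    linarith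
  have hcauchy : ∀ ε : ℝ, 0 < ε → ∃ N, ∀ j ≥ N, ∀ k ≥ N,
      rf.Energy (u j - u k) (u j - u k) < ε := by
    intro ε hε
    obtain ⟨N, hN⟩ := exists_nat_gt (4 / ε)
    refine ⟨N, fun j hj k hk => ?_⟩
    have hN0 : (0 : ℝ) < (N : ℝ) := lt_of_le_of_lt (by positivity) hN
    have hNj : (N : ℝ) ≤ (j : ℝ) + 1 := by
      have : (N : ℝ) ≤ (j : ℝ) := by exact_mod_cast hj
      linarith
    have hNk : (N : ℝ) ≤ (k : ℝ) + 1 := by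
      have : (N : ℝ) ≤ (k : ℝ) := by exact_mod_cast hk
      linarith
    have h1 : 2 * (1 / ((j : ℝ) + 1)) ≤ 2 / (N : ℝ) := by
      rw [mul_one_div]; gcongr
    have h2 : 2 * (1 / ((k : ℝ) + 1)) ≤ 2 / (N : ℝ) := by
      rw [mul_one_div]; gcongr
    have h3 : 4 / (N : ℝ) < ε := by
      rw [div_lt_iff₀ hN0]
      have h4 := (div_lt_iff₀ hε).mp hN
      linarith
    have h5 := key j k
    have h6 : 2 / (N : ℝ) + 2 / (N : ℝ) = 4 / (N : ℝ) := by ring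
    linarith
  obtain ⟨v, hv, hvt⟩ := rf.complete u hudom hcauchy
  -- the limit has v p - v q = 1
  have hd : v p - v q = 1 := by
    have hb : ∀ n, (1 - (v p - v q)) ^ 2 ≤
        rf.R p q * rf.Energy (u n - v) (u n - v) := by
      intro n
      have hsub : u n - v ∈ rf.dom := rf.dom_sub (hudom n) hv
      have h := rf.sq_le_R_mul hsub p q
      have hval : (u n - v) p - (u n - v) q = 1 - (v p - v q) := by
        simp only [Pi.sub_apply, hup n, huq n]; ring
      rw [hval] at h
      exact h
    have hlim : Filter.Tendsto
        (fun n => rf.R p q * rf.Energy (u n - v) (u n - v))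
        Filter.atTop (nhds 0) := by
      have h := hvt.const_mul (rf.R p q)
      simpa using h
    have h0 : (1 - (v p - v q)) ^ 2 ≤ 0 := ge_of_tendsto' hlim hb
    have h1 : (1 - (v p - v q)) ^ 2 = 0 := le_antisymm h0 (sq_nonneg _)
    have h2 := pow_eq_zero_iff two_ne_zero |>.mp h1
    linarith
  -- normalize so that the value at q is exactly 0
  have hwdom : (fun x => v x - v q) ∈ rf.dom := by
    have hrep : (fun x => v x - v q) = (1 : ℝ) • v + (-(v q)) • (fun _ => (1 : ℝ)) := by
      funext x; simp; ring
    rw [hrep]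
    exact rf.dom_add_smul v hv _ (rf.const_mem 1) _ _
  have hwE : rf.Energy (fun x => v x - v q) (fun x => v x - v q) = rf.Energy v v := by
    have hrep : (fun x => v x - v q) = v + (fun _ : V => -(v q)) := by
      funext x; simp; ring
    rw [hrep, rf.E_expand, rf.E_const_right hv, rf.E_const_right (rf.const_mem _)]
    ring
  -- E v v ≤ m
  have hvE_le : rf.Energy v v ≤ m := by
    have hεnn : ∀ n, 0 ≤ rf.Energy (u n - v) (u n - v) :=
      fun n => rf.nonneg _ (rf.dom_sub (hudom n) hv)
    have hEub : ∀ n, rf.Energy (u n) (u n) ≤ m + 1 := by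
      intro n
      have h1 : 1 / ((n : ℝ) + 1) ≤ 1 := by
        rw [div_le_one (by positivity)]
        have := Nat.cast_nonneg (α := ℝ) n
        linarith
      linarith [huE n]
    have hbnd : ∀ n : ℕ, rf.Energy v v ≤ m + 1 / ((n : ℝ) + 1) +
        2 * Real.sqrt ((m + 1) * rf.Energy (u n - v) (u n - v)) +
        rf.Energy (u n - v) (u n - v) := by
      intro n
      have hvrep : rf.Energy v v = rf.Energy (u n) (u n)
          - 2 * rf.Energy (u n) (u n - v) + rf.Energy (u n - v) (u n - v) := by
        have h1 : rf.Energy v v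
            = rf.Energy (u n - (u n - v)) (u n - (u n - v)) := by
          rw [sub_sub_cancel]
        rw [h1, rf.E_sub_expand]
      have hcs := rf.cs (hudom n) (rf.dom_sub (hudom n) hv)
      have hs0 : 0 ≤ Real.sqrt ((m + 1) * rf.Energy (u n - v) (u n - v)) :=
        Real.sqrt_nonneg _
      have hs2 : Real.sqrt ((m + 1) * rf.Energy (u n - v) (u n - v)) ^ 2
          = (m + 1) * rf.Energy (u n - v) (u n - v) :=
        Real.sq_sqrt (mul_nonneg (by linarith) (hεnn n))
      have hsq : -(rf.Energy (u n) (u n - v)) ≤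
          Real.sqrt ((m + 1) * rf.Energy (u n - v) (u n - v)) := by
        nlinarith [hcs, hεnn n, hEub n, hs0, hs2]
      have hE2 := (huE n).le
      linarith [hvrep, hsq, hE2]
    have hslim : Filter.Tendsto
        (fun n => Real.sqrt ((m + 1) * rf.Energy (u n - v) (u n - v)))
        Filter.atTop (nhds 0) := by
      have h := (hvt.const_mul (m + 1)).sqrt
      simpa using h
    have hblim : Filter.Tendsto
        (fun n : ℕ => m + 1 / ((n : ℝ) + 1) +
          2 * Real.sqrt ((m + 1) * rf.Energy (u n - v) (u n - v)) +
          rf.Energy (u n - v) (u n - v)) Filter.atTop (nhds m) := by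
      have h1 : Filter.Tendsto (fun n : ℕ => m + 1 / ((n : ℝ) + 1))
          Filter.atTop (nhds (m + 0)) :=
        tendsto_const_nhds.add tendsto_one_div_add_atTop_nhds_zero_nat
      have h2 := (h1.add (hslim.const_mul 2)).add hvt
      simpa using h2
    exact ge_of_tendsto' hblim hbnd
  refine ⟨fun x => v x - v q, hwdom, by simpa using hd, by simp, ?_⟩
  intro f hf h1 h0
  calc rf.Energy (fun x => v x - v q) (fun x => v x - v q)
      = rf.Energy v v := hwE
    _ ≤ m := hvE_le
    _ ≤ rf.Energy f f := hmle f hf h1 h0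

lemma exists_good_min {p q : V} (hpq : p ≠ q) :
    ∃ h ∈ rf.dom, h p = 1 ∧ h q = 0 ∧ (∀ x, 0 ≤ h x) ∧ (∀ x, h x ≤ 1) ∧
      0 < rf.Energy h h ∧
      (∀ f ∈ rf.dom, rf.Energy h f = rf.Energy h h * (f p - f q)) := by
  obtain ⟨w, hw, hwp, hwq, hwmin⟩ := rf.exists_min hpq
  obtain ⟨hdom, hle⟩ := rf.markov w hw
  set h : V → ℝ := fun x => min 1 (max 0 (w x)) with hh
  have hp1 : h p = 1 := by simp [hh, hwp]
  have hq0 : h q = 0 := by simp [hh, hwq]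
  have h0 : ∀ x, 0 ≤ h x := fun x => le_min one_pos.le (le_max_left _ _)
  have h1 : ∀ x, h x ≤ 1 := fun x => min_le_left _ _
  have hmin : ∀ f ∈ rf.dom, f p = 1 → f q = 0 →
      rf.Energy h h ≤ rf.Energy f f :=
    fun f hf a b => le_trans hle (hwmin f hf a b)
  have hpos : 0 < rf.Energy h h := rf.energy_pos_of_sep hdom hp1 hq0
  refine ⟨h, hdom, hp1, hq0, h0, h1, hpos, ?_⟩
  have hEL0 : ∀ g ∈ rf.dom, g p = 0 → g q = 0 → rf.Energy h g = 0 := by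
    intro g hg hgp hgq
    have key : ∀ t : ℝ,
        0 ≤ rf.Energy g g * (t * t) + (2 * rf.Energy h g) * t + 0 := by
      intro t
      have hmem : h + t • g ∈ rf.dom := by
        have hx := rf.dom_add_smul h hdom g hg 1 t; simpa using hx
      have hvp : (h + t • g) p = 1 := by simp [hp1, hgp]
      have hvq : (h + t • g) q = 0 := by simp [hq0, hgq]
      have hgt := hmin _ hmem hvp hvq
      rw [rf.E_expand, rf.E_smul_right, rf.E_smul_left, rf.E_smul_right] at hgt
      nlinarith [hgt]
    have hd := discrim_le_zero key
    rw [discrim] at hd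
    have h2 : (2 * rf.Energy h g) ^ 2 ≤ 0 := by nlinarith [hd]
    have h3 : (2 * rf.Energy h g) ^ 2 = 0 := le_antisymm h2 (sq_nonneg _)
    have h4 := pow_eq_zero_iff two_ne_zero |>.mp h3
    linarith
  intro f hf
  have hfc : f + (-(f q)) • (fun _ => (1 : ℝ)) ∈ rf.dom := by
    have hx := rf.dom_add_smul f hf _ (rf.const_mem 1) 1 (-(f q)); simpa using hx
  have hgdom : f + (-(f q)) • (fun _ => (1 : ℝ)) + (-(f p - f q)) • h ∈ rf.dom := by
    have hx := rf.dom_add_smul _ hfc h hdom 1 (-(f p - f q)); simpa using hx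
  have hgp : ((f + (-(f q)) • (fun _ => (1 : ℝ)) + (-(f p - f q)) • h : V → ℝ)) p = 0 := by
    simp [hp1]; ring
  have hgq : ((f + (-(f q)) • (fun _ => (1 : ℝ)) + (-(f p - f q)) • h : V → ℝ)) q = 0 := by
    simp [hq0]
  have hz := hEL0 _ hgdom hgp hgq
  have hexp : rf.Energy h (f + (-(f q)) • (fun _ => (1 : ℝ)) + (-(f p - f q)) • h)
      = rf.Energy h f + (-(f q)) * rf.Energy h (fun _ => (1 : ℝ))
        + (-(f p - f q)) * rf.Energy h h := by
    rw [rf.E_add_right, rf.E_add_right, rf.E_smul_right, rf.E_smul_right]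
  rw [hexp, rf.E_const_right hdom 1] at hz
  linarith [hz]

end ResistanceForm


/-- The effective resistance `R` associated with a resistance form on a countable set `V_*`
is a metric: it is nonnegative, symmetric, vanishes exactly on the diagonal, and satisfies
the triangle inequality. -/
theorem stmt5 {V : Type} [Countable V] (rf : ResistanceForm V) :
    (∀ p q : V, 0 ≤ rf.R p q) ∧
    (∀ p q : V, rf.R p q = rf.R q p) ∧
    (∀ p q : V, rf.R p q = 0 ↔ p = q) ∧
    (∀ p q r : V, rf.R p r ≤ rf.R p q + rf.R q r) := by
  refine ⟨fun p q => rf.R_nonneg p q, fun p q => rf.R_symm p q, ?_, ?_⟩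
  · intro p q
    constructor
    · intro hR
      by_contra hpq
      obtain ⟨u, hu, hp1, hq0⟩ := rf.exists_sep hpq
      have hpos := rf.energy_pos_of_sep hu hp1 hq0
      have hle : (1 : ℝ) / rf.Energy u u ≤ rf.R p q := by
        rw [rf.R_eq]
        exact le_csSup (rf.bddAbove p q)
          ⟨u, hu, hpos, by rw [hp1, hq0]; norm_num⟩
      have hgt : (0 : ℝ) < 1 / rf.Energy u u := by positivity
      rw [hR] at hle
      linarith
    · rintro rfl; exact rf.R_self p
  · intro p q r
    by_cases hpq : p = q
    · subst hpq
      rw [rf.R_self]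
      linarith [le_refl (rf.R p r)]
    by_cases hqr : q = r
    · subst hqr
      rw [rf.R_self]
      linarith [le_refl (rf.R p q)]
    obtain ⟨h₁, h₁dom, h₁p, h₁q, h₁0, h₁1, h₁pos, h₁EL⟩ := rf.exists_good_min hpq
    obtain ⟨h₂, h₂dom, h₂p, h₂q, h₂0, h₂1, h₂pos, h₂EL⟩ := rf.exists_good_min hqr
    set m₁ := rf.Energy h₁ h₁ with hm₁
    set m₂ := rf.Energy h₂ h₂ with hm₂
    have hgdom : (1 / m₁) • h₁ + (1 / m₂) • h₂ ∈ rf.dom :=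
      rf.dom_add_smul _ h₁dom _ h₂dom _ _
    have hEg : ∀ f ∈ rf.dom,
        rf.Energy ((1 / m₁) • h₁ + (1 / m₂) • h₂) f = f p - f r := by
      intro f hf
      rw [rf.add_smul_left, h₁EL f hf, h₂EL f hf]
      field_simp
      ring
    have hEgg : rf.Energy ((1 / m₁) • h₁ + (1 / m₂) • h₂)
        ((1 / m₁) • h₁ + (1 / m₂) • h₂) ≤ 1 / m₁ + 1 / m₂ := by
      have hval := hEg _ hgdom
      have hgp : ((1 / m₁) • h₁ + (1 / m₂) • h₂) p = 1 / m₁ + 1 / m₂ * h₂ p := by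
        simp [h₁p]
      have hgr : ((1 / m₁) • h₁ + (1 / m₂) • h₂) r = 1 / m₁ * h₁ r := by
        simp [h₂q]
      rw [hval, hgp, hgr]
      have b1 : h₂ p ≤ 1 := h₂1 p
      have b2 : 0 ≤ h₁ r := h₁0 r
      have i1 : (0 : ℝ) ≤ 1 / m₁ := by positivity
      have i2 : (0 : ℝ) ≤ 1 / m₂ := by positivity
      nlinarith [mul_le_mul_of_nonneg_left b1 i2, mul_nonneg i1 b2]
    have h1R : 1 / m₁ ≤ rf.R p q := by
      rw [rf.R_eq]
      exact le_csSup (rf.bddAbove p q)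
        ⟨h₁, h₁dom, h₁pos, by rw [h₁p, h₁q, ← hm₁]; norm_num⟩
    have h2R : 1 / m₂ ≤ rf.R q r := by
      rw [rf.R_eq]
      exact le_csSup (rf.bddAbove q r)
        ⟨h₂, h₂dom, h₂pos, by rw [h₂p, h₂q, ← hm₂]; norm_num⟩
    rw [rf.R_eq]
    apply Real.sSup_le
    · rintro x ⟨f, hf, hfE, rfl⟩
      have hcs := rf.cs hgdom hf
      rw [hEg f hf] at hcs
      rw [div_le_iff₀ hfE]
      have e1 : rf.Energy ((1 / m₁) • h₁ + (1 / m₂) • h₂)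
            ((1 / m₁) • h₁ + (1 / m₂) • h₂) * rf.Energy f f
          ≤ (1 / m₁ + 1 / m₂) * rf.Energy f f :=
        mul_le_mul_of_nonneg_right hEgg (rf.nonneg f hf)
      have e2 : (1 / m₁ + 1 / m₂) * rf.Energy f f
          ≤ (rf.R p q + rf.R q r) * rf.Energy f f :=
        mul_le_mul_of_nonneg_right (by linarith) (rf.nonneg f hf)
      linarith
    · linarith [rf.R_nonneg p q, rf.R_nonneg q r]
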